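/- Let Π_p (p ≥ 2) be Borel probability measures on ℝ^d × ℝ^d such that the support of Π_p is c_p²-cyclically monotone, where c_p(x,y) = |x−y|_p is the ℓ^p norm distance. If Π_p converges weakly to a probability measure Π_∞, then the support of Π_∞ is c_∞²-cyclically monotone, where c_∞(x,y) = |x−y|_∞. -/
import Mathlib


open MeasureTheory Filter

/-- `c²`-cyclical monotonicity of a set `S ⊆ E × E`. -/
def CyclicallyMonotone2 {E : Type*} (c : E → E → ℝ) (S : Set (E × E)) : Prop :=
  ∀ (N : ℕ) (pts : Fin (N + 1) → E × E), (∀ i, pts i ∈ S) →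
    ∑ i, (c (pts i).1 (pts i).2) ^ 2 ≤ ∑ i, (c (pts i).1 (pts (i + 1)).2) ^ 2

/-- The support of a Borel measure on a metric space. -/
def measSupport {X : Type*} [PseudoMetricSpace X] [MeasurableSpace X]
    (μ : Measure X) : Set X :=
  {x | ∀ ε > 0, 0 < μ (Metric.ball x ε)}

/-- The ℓ^p distance on `ℝ^d`. -/
noncomputable def lpCost (d : ℕ) (p : ℝ) (x y : Fin d → ℝ) : ℝ :=
  (∑ i, |x i - y i| ^ p) ^ (1 / p)

/-- The ℓ^∞ distance on `ℝ^d` (the sup norm of `Fin d → ℝ`). -/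
noncomputable def linftyCost (d : ℕ) (x y : Fin d → ℝ) : ℝ := ‖x - y‖

lemma lpCost_nonneg (d : ℕ) (p : ℝ) (x y : Fin d → ℝ) : 0 ≤ lpCost d p x y := by
  unfold lpCost
  positivity

lemma norm_le_lpCost (d : ℕ) {p : ℝ} (hp : 0 < p) (x y : Fin d → ℝ) :
    ‖x - y‖ ≤ lpCost d p x y := by
  rw [pi_norm_le_iff_of_nonneg (lpCost_nonneg d p x y)]
  intro i
  have h1 : |x i - y i| ^ p ≤ ∑ j, |x j - y j| ^ p :=
    Finset.single_le_sum (f := fun j => |x j - y j| ^ p)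
      (fun j _ => Real.rpow_nonneg (abs_nonneg _) p) (Finset.mem_univ i)
  have h2 : (|x i - y i| ^ p) ^ (1/p) ≤ lpCost d p x y :=
    Real.rpow_le_rpow (Real.rpow_nonneg (abs_nonneg _) p) h1 (by positivity)
  calc ‖(x - y) i‖ = |x i - y i| := by simp [Real.norm_eq_abs]
    _ = (|x i - y i| ^ p) ^ (1/p) := by
        rw [← Real.rpow_mul (abs_nonneg _), mul_one_div, div_self hp.ne', Real.rpow_one]
    _ ≤ lpCost d p x y := h2

lemma lpCost_le (d : ℕ) {p : ℝ} (hp : 0 < p) (x y : Fin d → ℝ) :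
    lpCost d p x y ≤ (max (d:ℝ) 1) ^ (1/p) * ‖x - y‖ := by
  have hM : (0:ℝ) ≤ ‖x - y‖ := norm_nonneg _
  have h1 : ∑ i, |x i - y i| ^ p ≤ (max (d:ℝ) 1) * ‖x - y‖ ^ p := by
    calc ∑ i, |x i - y i| ^ p ≤ ∑ _i : Fin d, ‖x - y‖ ^ p := by
          apply Finset.sum_le_sum
          intro i _
          apply Real.rpow_le_rpow (abs_nonneg _) _ hp.le
          simpa [Real.norm_eq_abs] using norm_le_pi_norm (x - y) i
      _ = (d:ℝ) * ‖x - y‖ ^ p := by simp [mul_comm]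
      _ ≤ (max (d:ℝ) 1) * ‖x - y‖ ^ p :=
          mul_le_mul_of_nonneg_right (le_max_left _ _) (Real.rpow_nonneg hM p)
  calc lpCost d p x y ≤ ((max (d:ℝ) 1) * ‖x - y‖ ^ p) ^ (1/p) :=
        Real.rpow_le_rpow (Finset.sum_nonneg fun i _ => Real.rpow_nonneg (abs_nonneg _) p)
          h1 (by positivity)
    _ = (max (d:ℝ) 1) ^ (1/p) * ‖x - y‖ := by
        rw [Real.mul_rpow (by positivity) (Real.rpow_nonneg hM p),
          ← Real.rpow_mul hM, mul_one_div, div_self hp.ne', Real.rpow_one]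

/-- An open ball of positive measure contains a point of the support. -/
lemma exists_support_point {X : Type*} [PseudoMetricSpace X]
    [SecondCountableTopology X]
    [MeasurableSpace X] {μ : Measure X} {x : X} {δ : ℝ}
    (h : μ (Metric.ball x δ) ≠ 0) :
    ∃ z, z ∈ measSupport μ ∧ dist z x < δ := by
  obtain ⟨z, hzB, hz⟩ := MeasureTheory.exists_mem_forall_mem_nhdsWithin_pos_measure h
  refine ⟨z, ?_, Metric.mem_ball.mp hzB⟩
  intro ε hε
  have hmem : Metric.ball z ε ∩ Metric.ball x δ ∈ nhdsWithin z (Metric.ball x δ) :=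
    Filter.inter_mem (mem_nhdsWithin_of_mem_nhds (Metric.ball_mem_nhds z hε))
      self_mem_nhdsWithin
  exact lt_of_lt_of_le (hz _ hmem) (measure_mono Set.inter_subset_left)

/-- If each `Π_p` has `c_p²`-cyclically monotone support and `Π_p → Π_∞` weakly
as `p → ∞`, then the support of `Π_∞` is `c_∞²`-cyclically monotone. -/
theorem support_limit_cyclically_monotone (d : ℕ)
    (Pp : ℝ → ProbabilityMeasure ((Fin d → ℝ) × (Fin d → ℝ)))
    (Plim : ProbabilityMeasure ((Fin d → ℝ) × (Fin d → ℝ)))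
    (hmono : ∀ p ≥ (2:ℝ), CyclicallyMonotone2 (lpCost d p)
      (measSupport ((Pp p) : Measure ((Fin d → ℝ) × (Fin d → ℝ)))))
    (hconv : Tendsto Pp atTop (nhds Plim)) :
    CyclicallyMonotone2 (linftyCost d)
      (measSupport (Plim : Measure ((Fin d → ℝ) × (Fin d → ℝ)))) := by
  intro N pts hpts
  set D : Fin (N+1) → ℝ := fun i => dist (pts i).1 (pts i).2 with hDdef
  set Ee : Fin (N+1) → ℝ := fun i => dist (pts i).1 (pts (i+1)).2 with hEdef
  suffices hDE : ∑ i, D i ^ 2 ≤ ∑ i, Ee i ^ 2 by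
    simpa [linftyCost, hDdef, hEdef, dist_eq_norm] using hDE
  set κ : ℝ → ℝ := fun p => (max (d:ℝ) 1) ^ (1/p) with hκdef
  -- Key inequality for every δ > 0
  have key : ∀ δ : ℝ, 0 < δ →
      ∑ i, (max (D i - 2*δ) 0)^2 ≤ ∑ i, ((1+δ) * (Ee i + 2*δ))^2 := by
    intro δ hδ
    have h1 : ∀ᶠ p in atTop, (2:ℝ) ≤ p := eventually_ge_atTop 2
    have h2 : ∀ᶠ p in atTop, κ p ≤ 1 + δ := by
      have hbase : (0:ℝ) < max (d:ℝ) 1 := lt_of_lt_of_le one_pos (le_max_right _ _)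
      have hinv : Tendsto (fun p : ℝ => 1/p) atTop (nhds 0) := by
        simpa [one_div] using tendsto_inv_atTop_zero
      have ht : Tendsto κ atTop (nhds ((max (d:ℝ) 1) ^ (0:ℝ))) :=
        (Real.continuousAt_const_rpow hbase.ne').tendsto.comp hinv
      rw [Real.rpow_zero] at ht
      have hev : ∀ᶠ x : ℝ in nhds 1, x ≤ 1 + δ := eventually_le_nhds (by linarith)
      exact ht.eventually hev
    have h3 : ∀ᶠ p in atTop, ∀ i : Fin (N+1),
        (0:ENNReal) < (Pp p : Measure ((Fin d → ℝ) × (Fin d → ℝ))) (Metric.ball (pts i) δ) := by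
      rw [eventually_all]
      intro i
      have hpos : (0:ENNReal) <
          (Plim : Measure ((Fin d → ℝ) × (Fin d → ℝ))) (Metric.ball (pts i) δ) :=
        hpts i δ hδ
      have hlim := ProbabilityMeasure.le_liminf_measure_open_of_tendsto hconv
        (Metric.isOpen_ball (x := pts i) (ε := δ))
      exact eventually_lt_of_lt_liminf (lt_of_lt_of_le hpos hlim)
    obtain ⟨p, hp2, hpκ, hp3⟩ := (h1.and (h2.and h3)).exists
    have hp0 : (0:ℝ) < p := lt_of_lt_of_le two_pos hp2
    have hκ0 : (0:ℝ) ≤ κ p := Real.rpow_nonneg (le_trans zero_le_one (le_max_right _ _)) _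
    have hz : ∀ i : Fin (N+1), ∃ z,
        z ∈ measSupport ((Pp p : Measure ((Fin d → ℝ) × (Fin d → ℝ)))) ∧
        dist z (pts i) < δ :=
      fun i => exists_support_point (hp3 i).ne'
    choose z hzS hzd using hz
    have hz1 : ∀ i, dist (z i).1 (pts i).1 < δ := fun i =>
      lt_of_le_of_lt (by rw [Prod.dist_eq]; exact le_max_left _ _) (hzd i)
    have hz2 : ∀ i, dist (z i).2 (pts i).2 < δ := fun i =>
      lt_of_le_of_lt (by rw [Prod.dist_eq]; exact le_max_right _ _) (hzd i)
    have hchain := hmono p hp2 N z hzS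
    have hlow : ∀ i : Fin (N+1),
        (max (D i - 2*δ) 0)^2 ≤ (lpCost d p (z i).1 (z i).2) ^ 2 := by
      intro i
      have hd1 : D i ≤ dist (pts i).1 (z i).1 + dist (z i).1 (z i).2 + dist (z i).2 (pts i).2 :=
        dist_triangle4 _ _ _ _
      have hd2 : D i - 2*δ ≤ dist (z i).1 (z i).2 := by
        have := (hz1 i)
        have := (hz2 i)
        rw [dist_comm (pts i).1 (z i).1] at hd1
        linarith
      have hle : max (D i - 2*δ) 0 ≤ lpCost d p (z i).1 (z i).2 := by
        apply max_le _ (lpCost_nonneg d p _ _)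
        calc D i - 2*δ ≤ dist (z i).1 (z i).2 := hd2
          _ = ‖(z i).1 - (z i).2‖ := dist_eq_norm _ _
          _ ≤ lpCost d p (z i).1 (z i).2 := norm_le_lpCost d hp0 _ _
      exact pow_le_pow_left₀ (le_max_right _ _) hle 2
    have hhigh : ∀ i : Fin (N+1),
        (lpCost d p (z i).1 (z (i+1)).2) ^ 2 ≤ ((1+δ) * (Ee i + 2*δ))^2 := by
      intro i
      have hd1 : dist (z i).1 (z (i+1)).2 ≤
          dist (z i).1 (pts i).1 + dist (pts i).1 (pts (i+1)).2 + dist (pts (i+1)).2 (z (i+1)).2 :=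
        dist_triangle4 _ _ _ _
      have hd2 : dist (z i).1 (z (i+1)).2 ≤ Ee i + 2*δ := by
        have := hz1 i
        have := hz2 (i+1)
        rw [dist_comm (pts (i+1)).2 (z (i+1)).2] at hd1
        simp only [hEdef]
        linarith
      have hle : lpCost d p (z i).1 (z (i+1)).2 ≤ (1+δ) * (Ee i + 2*δ) := by
        calc lpCost d p (z i).1 (z (i+1)).2 ≤ κ p * ‖(z i).1 - (z (i+1)).2‖ :=
              lpCost_le d hp0 _ _
          _ = κ p * dist (z i).1 (z (i+1)).2 := by rw [dist_eq_norm]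
          _ ≤ κ p * (Ee i + 2*δ) := mul_le_mul_of_nonneg_left hd2 hκ0
          _ ≤ (1+δ) * (Ee i + 2*δ) := by
              apply mul_le_mul_of_nonneg_right hpκ
              have : (0:ℝ) ≤ Ee i := dist_nonneg
              linarith
      exact pow_le_pow_left₀ (lpCost_nonneg d p _ _) hle 2
    calc ∑ i, (max (D i - 2*δ) 0)^2 ≤ ∑ i, (lpCost d p (z i).1 (z i).2) ^ 2 :=
          Finset.sum_le_sum fun i _ => hlow i
      _ ≤ ∑ i, (lpCost d p (z i).1 (z (i+1)).2) ^ 2 := hchain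
      _ ≤ ∑ i, ((1+δ) * (Ee i + 2*δ))^2 := Finset.sum_le_sum fun i _ => hhigh i
  -- Take the limit δ → 0 along δ = 1/(n+1)
  have hu : Tendsto (fun n : ℕ => (1:ℝ)/(n+1)) atTop (nhds 0) :=
    tendsto_one_div_add_atTop_nhds_zero_nat
  have hcf : Continuous (fun δ : ℝ => ∑ i, (max (D i - 2*δ) 0)^2) := by
    apply continuous_finset_sum
    intro i _
    exact ((continuous_const.sub (continuous_const.mul continuous_id)).max
      continuous_const).pow 2
  have hcg : Continuous (fun δ : ℝ => ∑ i, ((1+δ) * (Ee i + 2*δ))^2) := by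
    apply continuous_finset_sum
    intro i _
    exact (((continuous_const.add continuous_id).mul
      (continuous_const.add (continuous_const.mul continuous_id))).pow 2)
  have hf : Tendsto (fun n : ℕ => ∑ i, (max (D i - 2*((1:ℝ)/(n+1))) 0)^2) atTop
      (nhds (∑ i, D i ^ 2)) := by
    have h0 : ∑ i, (max (D i - 2*(0:ℝ)) 0)^2 = ∑ i, D i ^ 2 := by
      refine Finset.sum_congr rfl fun i _ => ?_
      rw [mul_zero, sub_zero, max_eq_left (dist_nonneg)]
    have := (hcf.tendsto 0).comp hu
    rw [h0] at this
    exact this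
  have hg : Tendsto (fun n : ℕ => ∑ i, ((1+(1:ℝ)/(n+1)) * (Ee i + 2*((1:ℝ)/(n+1))))^2) atTop
      (nhds (∑ i, Ee i ^ 2)) := by
    have h0 : ∑ i, ((1+(0:ℝ)) * (Ee i + 2*(0:ℝ)))^2 = ∑ i, Ee i ^ 2 := by
      refine Finset.sum_congr rfl fun i _ => ?_
      ring
    have := (hcg.tendsto 0).comp hu
    rw [h0] at this
    exact this
  exact le_of_tendsto_of_tendsto' hf hg fun n => key _ (by positivity)
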